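/- Let (L,·) be a loop, A(L) a subgroup of its automorphism group, and H(L) the A(L)-holomorph of (L,·). If H(L) is an Osborn loop, then for all x, y ∈ L and all α ∈ A(L): (α(x)·x^ρ)·(x·y) = α(x)·y, x·(α(x))^ρ = (α(x)·x^ρ)^ρ, and (α(x)·x^ρ)·x = α(x). -/

import Mathlib

/-- A loop: a set with multiplication, left and right division, and a
two-sided identity element, such that all translations are bijections
(expressed via the division operations). -/
structure Loop (L : Type*) where
  mul : L → L → L
  ldiv : L → L → L
  rdiv : L → L → L
  e : L
  mul_ldiv : ∀ x y, mul x (ldiv x y) = y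
  ldiv_mul : ∀ x y, ldiv x (mul x y) = y
  rdiv_mul : ∀ x y, mul (rdiv y x) x = y
  mul_rdiv : ∀ x y, rdiv (mul y x) x = y
  e_mul : ∀ x, mul e x = x
  mul_e : ∀ x, mul x e = x

namespace Loop

variable {L : Type*} (Q : Loop L)

/-- The left inverse `x^λ`, the unique element with `x^λ · x = e`. -/
def linv (x : L) : L := Q.rdiv Q.e x

/-- The right inverse `x^ρ`, the unique element with `x · x^ρ = e`. -/
def rinv (x : L) : L := Q.ldiv x Q.e

/-- A loop is Osborn if `x·((y·z)·x) = (x·((y·x^λ)·x))·(z·x)` for all `x,y,z`. -/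
def IsOsborn : Prop :=
  ∀ x y z, Q.mul x (Q.mul (Q.mul y z) x) =
    Q.mul (Q.mul x (Q.mul (Q.mul y (Q.linv x)) x)) (Q.mul z x)

/-- The automorphism group of a loop, as a subgroup of the permutation group. -/
def autGroup : Subgroup (Equiv.Perm L) where
  carrier := {α | ∀ x y, α (Q.mul x y) = Q.mul (α x) (α y)}
  one_mem' := fun _ _ => rfl
  mul_mem' := by
    intro α β ha hb x y
    simp only [Equiv.Perm.mul_apply]
    rw [hb x y, ha]
  inv_mem' := by
    intro α ha x y
    apply α.injective
    rw [ha]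
    simp

theorem mem_autGroup_iff {α : Equiv.Perm L} :
    α ∈ Q.autGroup ↔ ∀ x y, α (Q.mul x y) = Q.mul (α x) (α y) := Iff.rfl

theorem aut_fix_e {α : Equiv.Perm L} (hα : α ∈ Q.autGroup) : α Q.e = Q.e := by
  have h1 : α (Q.mul Q.e Q.e) = Q.mul (α Q.e) (α Q.e) := hα Q.e Q.e
  rw [Q.mul_e] at h1
  have h2 : Q.mul (α Q.e) (α Q.e) = Q.mul (α Q.e) Q.e := by rw [Q.mul_e, ← h1]
  have h3 := congrArg (Q.ldiv (α Q.e)) h2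
  rwa [Q.ldiv_mul, Q.ldiv_mul] at h3

/-- The `A`-holomorph of a loop `(L,·)`: the loop on `A × L` with multiplication
`(α,x)∘(β,y) = (α∘β, β(x)·y)`, where `A` is a subgroup of the automorphism group. -/
def Holomorph (A : Subgroup (Equiv.Perm L)) (hA : A ≤ Q.autGroup) : Loop (A × L) where
  mul p q := (p.1 * q.1, Q.mul ((q.1 : Equiv.Perm L) p.2) q.2)
  ldiv p r := (p.1⁻¹ * r.1, Q.ldiv (((p.1⁻¹ * r.1 : A) : Equiv.Perm L) p.2) r.2)
  rdiv r q := (r.1 * q.1⁻¹, ((q.1⁻¹ : A) : Equiv.Perm L) (Q.rdiv r.2 q.2))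
  e := (1, Q.e)
  mul_ldiv p r := by
    refine Prod.ext ?_ ?_
    · simp
    · simp [Q.mul_ldiv]
  ldiv_mul p q := by
    refine Prod.ext ?_ ?_
    · simp
    · simp [inv_mul_cancel_left, Q.ldiv_mul]
  rdiv_mul r q := by
    refine Prod.ext ?_ ?_
    · simp
    · simp [Q.rdiv_mul]
  mul_rdiv p q := by
    refine Prod.ext ?_ ?_
    · simp
    · simp [Q.mul_rdiv]
  e_mul p := by
    refine Prod.ext ?_ ?_
    · simp
    · simp [Q.aut_fix_e (hA p.1.2), Q.e_mul]
  mul_e p := by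
    refine Prod.ext ?_ ?_
    · simp
    · simp [Q.mul_e]

/-- A triple `(A,B,C)` of bijections of `L` is an autotopism of `(L,·)` if
`A(x)·B(y) = C(x·y)` for all `x, y`. -/
def IsAutotopism (A B C : L → L) : Prop :=
  Function.Bijective A ∧ Function.Bijective B ∧ Function.Bijective C ∧
    ∀ x y, Q.mul (A x) (B y) = C (Q.mul x y)

/-- A bijection `U` is ρ-regular if `(I,U,U)` is an autotopism. -/
def IsRhoRegular (U : L → L) : Prop := Q.IsAutotopism id U U

/-- A bijection `U` is λ-regular if `(U,I,U)` is an autotopism. -/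
def IsLambdaRegular (U : L → L) : Prop := Q.IsAutotopism U id U

/-- `U'` is an adjoint of the bijection `U` if `(U, U'⁻¹, I)` is an autotopism. -/
def IsMuAdjoint (U U' : L → L) : Prop :=
  letI : Nonempty L := ⟨Q.e⟩
  Function.Bijective U' ∧ Q.IsAutotopism U (Function.invFun U') id

/-- `U` is μ-regular if it has an adjoint, i.e. `(U, U'⁻¹, I)` is an
autotopism for some bijection `U'`. The μ-regular bijections form `Φ(L,·)`. -/
def IsMuRegular (U : L → L) : Prop := ∃ U', Q.IsMuAdjoint U U'

/-- `U'` belongs to `Ψ(L,·)`, the group of adjoints of μ-regular bijections. -/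
def IsPsi (U' : L → L) : Prop := ∃ U, Q.IsMuAdjoint U U'

/-- Membership in the left nucleus `N_λ`. -/
def InNlambda (a : L) : Prop := ∀ y z, Q.mul a (Q.mul y z) = Q.mul (Q.mul a y) z

/-- Membership in the middle nucleus `N_μ`. -/
def InNmu (a : L) : Prop := ∀ y z, Q.mul (Q.mul y a) z = Q.mul y (Q.mul a z)

/-- Membership in the right nucleus `N_ρ`. -/
def InNrho (a : L) : Prop := ∀ y z, Q.mul (Q.mul y z) a = Q.mul y (Q.mul z a)

/-- Membership in the nucleus `N = N_λ ∩ N_μ ∩ N_ρ`. -/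
def InNucleus (a : L) : Prop := Q.InNlambda a ∧ Q.InNmu a ∧ Q.InNrho a

/-- Membership in the center `Z = N ∩ C`. -/
def InCenter (a : L) : Prop := Q.InNucleus a ∧ ∀ x, Q.mul a x = Q.mul x a

end Loop

/-- If `H(L)` is an Osborn loop, then for all `x, y ∈ L` and all
`α ∈ A(L)`: `(α(x)·x^ρ)·(x·y) = α(x)·y`, `x·(α(x))^ρ = (α(x)·x^ρ)^ρ`, and
`(α(x)·x^ρ)·x = α(x)`. -/
theorem holomorph_osborn_identities_alpha {L : Type*} (Q : Loop L)
    (A : Subgroup (Equiv.Perm L)) (hA : A ≤ Q.autGroup) :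
    (Q.Holomorph A hA).IsOsborn →
      ∀ (x y : L) (α : A),
        Q.mul (Q.mul ((α : Equiv.Perm L) x) (Q.rinv x)) (Q.mul x y) = Q.mul ((α : Equiv.Perm L) x) y ∧
        Q.mul x (Q.rinv ((α : Equiv.Perm L) x)) = Q.rinv (Q.mul ((α : Equiv.Perm L) x) (Q.rinv x)) ∧
        Q.mul (Q.mul ((α : Equiv.Perm L) x) (Q.rinv x)) x = ((α : Equiv.Perm L) x) := by
  intro hO
  have key : ∀ (β : A) (x u t : L),
      Q.mul ((β : Equiv.Perm L) x) (Q.mul (Q.mul u t) x) =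
        Q.mul (Q.mul ((β : Equiv.Perm L) x) (Q.mul (Q.mul u (Q.linv x)) x)) (Q.mul t x) := by
    intro β x u t
    have hβ : ∀ a b, (β : Equiv.Perm L) (Q.mul a b) = Q.mul ((β : Equiv.Perm L) a) ((β : Equiv.Perm L) b) := hA β.2
    have h := congrArg Prod.snd (hO (β, x) (β, u) (β⁻¹, ((β⁻¹ : A) : Equiv.Perm L) t))
    simp only [Loop.Holomorph, Loop.linv, Loop.rinv] at h
    simp only [mul_assoc, one_mul, mul_one, inv_mul_cancel, mul_inv_cancel, hβ,
      InvMemClass.coe_inv, OneMemClass.coe_one, Equiv.Perm.coe_inv, Equiv.apply_symm_apply,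
      Equiv.symm_apply_apply, Equiv.Perm.coe_one, id_eq, Equiv.Perm.one_apply] at h
    simpa only [Loop.linv] using h
  intro x y α
  have g1 : ∀ y : L, Q.mul (Q.mul ((α : Equiv.Perm L) x) (Q.rinv x)) (Q.mul x y)
      = Q.mul ((α : Equiv.Perm L) x) y := by
    intro y
    have hp : Q.mul (Q.mul (Q.rdiv (Q.rdiv (Q.rinv x) x) (Q.linv x)) (Q.linv x)) x
        = Q.rinv x := by rw [Q.rdiv_mul, Q.rdiv_mul]
    have ht : Q.mul (Q.rdiv (Q.mul x y) x) x = Q.mul x y := Q.rdiv_mul _ _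
    have hxr : Q.mul x (Q.rinv x) = Q.e := Q.mul_ldiv x Q.e
    have h2 := key 1 x (Q.rdiv (Q.rdiv (Q.rinv x) x) (Q.linv x)) (Q.rdiv (Q.mul x y) x)
    simp only [OneMemClass.coe_one, Equiv.Perm.one_apply] at h2
    rw [hp, ht, hxr, Q.e_mul] at h2
    have h3 : Q.mul (Q.mul (Q.rdiv (Q.rdiv (Q.rinv x) x) (Q.linv x)) (Q.rdiv (Q.mul x y) x)) x
        = y := by
      have h4 := congrArg (Q.ldiv x) h2
      rwa [Q.ldiv_mul, Q.ldiv_mul] at h4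
    have h5 := key α x (Q.rdiv (Q.rdiv (Q.rinv x) x) (Q.linv x)) (Q.rdiv (Q.mul x y) x)
    rw [hp, ht, h3] at h5
    exact h5.symm
  refine ⟨g1 y, ?_, ?_⟩
  · have h5 := g1 (Q.rinv ((α : Equiv.Perm L) x))
    rw [show Q.mul ((α : Equiv.Perm L) x) (Q.rinv ((α : Equiv.Perm L) x)) = Q.e from
      Q.mul_ldiv _ _] at h5
    have h6 := congrArg (Q.ldiv (Q.mul ((α : Equiv.Perm L) x) (Q.rinv x))) h5
    rw [Q.ldiv_mul] at h6
    simpa only [Loop.rinv] using h6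
  · have h7 := g1 Q.e
    rwa [Q.mul_e, Q.mul_e] at h7
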